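/- Define b : ℝ × P₂(ℝ) → ℝ by b(x, μ) := 2·sign(m(μ))·√|m(μ)|, where m(μ) := ∫_ℝ x dμ(x) and sign(x) := x/|x| for x ≠ 0, sign(0) := 0. Consider, for T > 0, the Fokker–Planck (characteristics) equation: y : [0,T] × [0,1] → ℝ with y_t(u) = ∫₀ᵗ b(y_s(u), μ_s) ds for all t ∈ [0,T] and u ∈ [0,1], where μ_s is the pushforward of Lebesgue measure on [0,1] under u ↦ y_s(u), with initial condition y_0 ≡ 0. Then both y¹_t(u) := 0 and y²_t(u) := t² are solutions; in particular uniqueness fails for this equation. -/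
import Mathlib


open MeasureTheory

/-- The Peano-type drift `b(x,μ) = 2 sign(m(μ)) √|m(μ)|` with `m(μ) = ∫ x dμ`. -/
noncomputable def peanoDrift (_x : ℝ) (μ : Measure ℝ) : ℝ :=
  2 * Real.sign (∫ x, x ∂μ) * Real.sqrt |∫ x, x ∂μ|

/-- `y` solves the Fokker–Planck characteristics equation
`y_t(u) = ∫₀ᵗ b(y_s(u), μ_s) ds` with `μ_s` the image of `Leb_{[0,1]}` under `y_s`,
and initial condition `y_0 ≡ 0`. -/
def IsSol (T : ℝ) (y : ℝ → ℝ → ℝ) : Prop :=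
  ∀ t ∈ Set.Icc (0:ℝ) T, ∀ u ∈ Set.Icc (0:ℝ) 1,
    y t u = ∫ s in Set.Icc (0:ℝ) t,
      peanoDrift (y s u) ((volume.restrict (Set.Icc (0:ℝ) 1)).map (y s))

lemma map_const_Icc (c : ℝ) :
    (volume.restrict (Set.Icc (0:ℝ) 1)).map (fun _ => c) = Measure.dirac c := by
  rw [Measure.map_const]
  simp [Real.volume_Icc]

lemma drift_const (x c : ℝ) :
    peanoDrift x ((volume.restrict (Set.Icc (0:ℝ) 1)).map (fun _ => c)) =
      2 * Real.sign c * Real.sqrt |c| := by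
  rw [map_const_Icc]
  simp [peanoDrift, integral_dirac]

theorem stmt13 (T : ℝ) (hT : 0 < T) :
    IsSol T (fun _ _ => 0) ∧ IsSol T (fun t _ => t ^ 2) ∧
    ¬ (∀ t ∈ Set.Icc (0:ℝ) T, ∀ u ∈ Set.Icc (0:ℝ) 1,
        (fun (_ _ : ℝ) => (0:ℝ)) t u = (fun (t : ℝ) (_ : ℝ) => t ^ 2) t u) := by
  refine ⟨?_, ?_, ?_⟩
  · intro t ht u hu
    simp only
    rw [setIntegral_congr_fun measurableSet_Icc (g := fun _ => (0:ℝ))]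
    · simp
    · intro s _
      rw [drift_const]
      simp
  · intro t ht u hu
    simp only
    have h1 : ∀ s ∈ Set.Icc (0:ℝ) t,
        peanoDrift (s ^ 2) ((volume.restrict (Set.Icc (0:ℝ) 1)).map (fun _ => s ^ 2)) =
          2 * s := by
      intro s hs
      rw [drift_const]
      rcases eq_or_lt_of_le hs.1 with h | h
      · simp [← h]
      · rw [Real.sign_of_pos (by positivity), abs_of_nonneg (by positivity),
          Real.sqrt_sq hs.1]
        ring
    rw [setIntegral_congr_fun measurableSet_Icc h1,
      MeasureTheory.integral_Icc_eq_integral_Ioc,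
      ← intervalIntegral.integral_of_le ht.1]
    have : ∫ s in (0:ℝ)..t, 2 * s = 2 * ∫ s in (0:ℝ)..t, s :=
      intervalIntegral.integral_const_mul 2 _
    rw [this, integral_id]
    ring
  · intro h
    have := h T ⟨le_of_lt hT, le_refl T⟩ 0 ⟨le_refl 0, zero_le_one⟩
    simp only at this
    nlinarith
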